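/- arXiv:0806.4850 — 3 statements merged into one kernel-verified Lean document; each statement's English description precedes it below -/
import Mathlib

section
/- (Dyadic decomposition estimate) Let μ be a positive Borel measure on a space X, let φ : X → (-∞, 0) be measurable, and suppose that for every Borel set B, μ(B) ≤ (sup_B |φ|)ⁿ · Cap(B) where Cap is a monotone set function. Then there is a constant C depending only on n such that for every Borel set K, μ(K) ≤ C ∫₀^∞ s^{n-1} Cap(K ∩ {φ ≤ -s}) ds. -/
open Set MeasureTheory ENNReal

/-- Dyadic decomposition estimate: if μ(B) ≤ (sup_B |φ|)ⁿ·Cap(B)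
for every Borel set B (φ < 0, Cap monotone), then there is C = C(n) with
μ(K) ≤ C ∫₀^∞ s^(n-1) Cap(K ∩ {φ ≤ -s}) ds for every Borel K. -/
theorem stmt3 {X : Type*} [MeasurableSpace X] (μ : Measure X)
    (φ : X → ℝ) (hφmeas : Measurable φ) (hφneg : ∀ x, φ x < 0)
    (n : ℕ) (hn : 1 ≤ n)
    (Cap : Set X → ℝ≥0∞)
    (hCapMono : ∀ A B : Set X, A ⊆ B → Cap A ≤ Cap B)
    (hcomp : ∀ B : Set X, MeasurableSet B →
      μ B ≤ (⨆ x ∈ B, ENNReal.ofReal (-φ x)) ^ n * Cap B) :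
    ∃ C : ℝ≥0∞, 0 < C ∧ C < ⊤ ∧ ∀ K : Set X, MeasurableSet K →
      μ K ≤ C * ∫⁻ s in Set.Ioi (0 : ℝ),
        ENNReal.ofReal (s ^ (n - 1)) * Cap (K ∩ {x | φ x ≤ -s}) := by
  obtain ⟨m, rfl⟩ := Nat.exists_eq_succ_of_ne_zero (by omega : n ≠ 0)
  refine ⟨4 ^ (m + 1), by positivity, ENNReal.pow_lt_top (by norm_num), ?_⟩
  intro K hK
  rw [show m + 1 - 1 = m from rfl]
  set g : ℝ → ℝ≥0∞ := fun s => ENNReal.ofReal (s ^ m) * Cap (K ∩ {x | φ x ≤ -s})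
    with hg
  -- annuli
  set A : ℤ → Set X := fun j =>
    K ∩ {x | (2:ℝ) ^ (j + 1) ≤ -φ x ∧ -φ x < (2:ℝ) ^ (j + 2)} with hA
  set L : ℤ → Set X := fun j => K ∩ {x | φ x ≤ -((2:ℝ) ^ (j + 1))} with hL
  set I : ℤ → Set ℝ := fun j => Ioc ((2:ℝ) ^ j) ((2:ℝ) ^ (j + 1)) with hI
  have h2pos : ∀ j : ℤ, (0:ℝ) < 2 ^ j := fun j => zpow_pos (by norm_num) j
  have hAmeas : ∀ j : ℤ, MeasurableSet (A j) := by
    intro j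
    refine hK.inter ?_
    have : {x | (2:ℝ) ^ (j + 1) ≤ -φ x ∧ -φ x < (2:ℝ) ^ (j + 2)}
        = φ ⁻¹' (Ioc (-(2:ℝ) ^ (j + 2)) (-(2:ℝ) ^ (j + 1))) := by
      ext x
      simp only [mem_setOf_eq, mem_preimage, mem_Ioc]
      constructor
      · rintro ⟨h1, h2⟩; exact ⟨by linarith, by linarith⟩
      · rintro ⟨h1, h2⟩; exact ⟨by linarith, by linarith⟩
    rw [this]
    exact hφmeas measurableSet_Ioc
  -- cover
  have hcover : K ⊆ ⋃ j : ℤ, A j := by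
    intro x hx
    obtain ⟨j, hj1, hj2⟩ := exists_mem_Ico_zpow (neg_pos.2 (hφneg x)) (one_lt_two (α := ℝ))
    refine mem_iUnion.2 ⟨j - 1, hx, ?_, ?_⟩
    · rw [sub_add_cancel]; exact hj1
    · have : j - 1 + 2 = j + 1 := by ring
      rw [this]; exact hj2
  -- per-annulus measure bound
  have hAj : ∀ j : ℤ, μ (A j)
      ≤ 4 ^ (m + 1) * (ENNReal.ofReal ((2:ℝ) ^ j) ^ (m + 1) * Cap (L j)) := by
    intro j
    have h1 : μ (A j) ≤ (⨆ x ∈ A j, ENNReal.ofReal (-φ x)) ^ (m + 1) * Cap (A j) :=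
      hcomp (A j) (hAmeas j)
    have hsup : (⨆ x ∈ A j, ENNReal.ofReal (-φ x)) ≤ ENNReal.ofReal ((2:ℝ) ^ (j + 2)) := by
      refine iSup₂_le fun x hx => ENNReal.ofReal_le_ofReal hx.2.2.le
    have hsub : A j ⊆ L j := by
      rintro x ⟨hxK, hx1, _⟩
      refine ⟨hxK, ?_⟩
      simp only [mem_setOf_eq]; linarith
    have h2 : μ (A j) ≤ ENNReal.ofReal ((2:ℝ) ^ (j + 2)) ^ (m + 1) * Cap (L j) :=
      h1.trans (mul_le_mul' (pow_le_pow_left' hsup _) (hCapMono _ _ hsub))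
    have hofr : ENNReal.ofReal ((2:ℝ) ^ (j + 2)) = 4 * ENNReal.ofReal ((2:ℝ) ^ j) := by
      have : (2:ℝ) ^ (j + 2) = 4 * (2:ℝ) ^ j := by
        rw [zpow_add₀ (two_ne_zero)]; norm_num; ring
      rw [this, ENNReal.ofReal_mul (by norm_num)]
      norm_num
    calc μ (A j) ≤ ENNReal.ofReal ((2:ℝ) ^ (j + 2)) ^ (m + 1) * Cap (L j) := h2
      _ = 4 ^ (m + 1) * (ENNReal.ofReal ((2:ℝ) ^ j) ^ (m + 1) * Cap (L j)) := by
          rw [hofr, mul_pow, mul_assoc]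
  -- per-interval integral lower bound
  have hIj : ∀ j : ℤ,
      ENNReal.ofReal ((2:ℝ) ^ j) ^ (m + 1) * Cap (L j) ≤ ∫⁻ s in I j, g s := by
    intro j
    have hconst : ∫⁻ _ in I j, (ENNReal.ofReal (((2:ℝ) ^ j) ^ m) * Cap (L j)) ∂volume
        = ENNReal.ofReal ((2:ℝ) ^ j) ^ (m + 1) * Cap (L j) := by
      rw [setLIntegral_const]
      have hvol : volume (I j) = ENNReal.ofReal ((2:ℝ) ^ j) := by
        rw [hI]; simp only [Real.volume_Ioc]
        congr 1
        rw [zpow_add₀ (two_ne_zero : (2:ℝ) ≠ 0)]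
        ring
      rw [hvol, ENNReal.ofReal_pow (h2pos j).le]
      ring
    rw [← hconst]
    refine setLIntegral_mono' measurableSet_Ioc fun s hs => ?_
    have hs1 : (2:ℝ) ^ j < s := hs.1
    have hs2 : s ≤ (2:ℝ) ^ (j + 1) := hs.2
    refine mul_le_mul' (ENNReal.ofReal_le_ofReal ?_) (hCapMono _ _ ?_)
    · exact pow_le_pow_left₀ (h2pos j).le hs1.le m
    · rintro x ⟨hxK, hx⟩
      exact ⟨hxK, by simp only [mem_setOf_eq] at hx ⊢; linarith⟩
  -- assemble
  have hdisj : Pairwise (Function.onFun Disjoint I) := by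
    have key : ∀ i j : ℤ, i < j → Disjoint (I i) (I j) := by
      intro i j hij
      rw [hI, Set.Ioc_disjoint_Ioc]
      have h1 : (2:ℝ) ^ (i + 1) ≤ 2 ^ j := zpow_le_zpow_right₀ one_le_two (by omega)
      exact le_trans (min_le_left _ _) (h1.trans (le_max_right _ _))
    intro i j hij
    rcases lt_or_gt_of_ne hij with h | h
    · exact key i j h
    · exact (key j i h).symm
  have hImeas : ∀ j : ℤ, MeasurableSet (I j) := fun j => measurableSet_Ioc
  have hsum : ∑' j : ℤ, ∫⁻ s in I j, g s = ∫⁻ s in ⋃ j, I j, g s :=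
    (lintegral_iUnion hImeas hdisj g).symm
  have hUnionsub : (⋃ j : ℤ, I j) ⊆ Ioi (0:ℝ) := by
    rintro s hs
    obtain ⟨j, hj⟩ := mem_iUnion.1 hs
    exact lt_trans (h2pos j) hj.1
  calc μ K ≤ μ (⋃ j : ℤ, A j) := measure_mono hcover
    _ ≤ ∑' j : ℤ, μ (A j) := measure_iUnion_le A
    _ ≤ ∑' j : ℤ, 4 ^ (m + 1) * (ENNReal.ofReal ((2:ℝ) ^ j) ^ (m + 1) * Cap (L j)) :=
        ENNReal.tsum_le_tsum hAj
    _ ≤ ∑' j : ℤ, 4 ^ (m + 1) * ∫⁻ s in I j, g s :=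
        ENNReal.tsum_le_tsum fun j => mul_le_mul_right (hIj j) _
    _ = 4 ^ (m + 1) * ∑' j : ℤ, ∫⁻ s in I j, g s := ENNReal.tsum_mul_left
    _ = 4 ^ (m + 1) * ∫⁻ s in ⋃ j, I j, g s := by rw [hsum]
    _ ≤ 4 ^ (m + 1) * ∫⁻ s in Ioi (0:ℝ), g s :=
        mul_le_mul_right (lintegral_mono_set hUnionsub) _
end

section
/- Let c : (0,∞) → [0,∞] be a decreasing function such that for all s, t > 0, tⁿ c(s+t) ≤ M(s) ≤ sⁿ c(s), where M(s) := ∫_{{φ<-s}}(dd^c φ)ⁿ is some decreasing function M : (0,∞) → [0,∞]. Then limsup_{s→0} sⁿ c(s) < ∞ if and only if M(s) is bounded as s → 0, and in that case lim_{s→0} sⁿ c(s) = lim_{s→0} M(s) and lim_{s→∞} sⁿ c(s) = lim_{s→∞} M(s). -/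
open Set Filter ENNReal Topology

/-- If decreasing c, M : (0,∞) → [0,∞] satisfy
tⁿ c(s+t) ≤ M(s) ≤ sⁿ c(s) for all s,t > 0, then limsup_{s→0} sⁿc(s) < ∞ iff
M is bounded near 0, and in that case the limits as s → 0 agree, and the limits
as s → ∞ agree. -/
theorem stmt4 (n : ℕ) (hn : 1 ≤ n) (c M : ℝ → ℝ≥0∞)
    (hc : AntitoneOn c (Set.Ioi (0 : ℝ)))
    (hM : AntitoneOn M (Set.Ioi (0 : ℝ)))
    (hleft : ∀ s t : ℝ, 0 < s → 0 < t →
      (ENNReal.ofReal t) ^ n * c (s + t) ≤ M s)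
    (hright : ∀ s : ℝ, 0 < s → M s ≤ (ENNReal.ofReal s) ^ n * c s) :
    ((Filter.limsup (fun s : ℝ => (ENNReal.ofReal s) ^ n * c s) (𝓝[>] 0) ≠ ⊤)
        ↔ Filter.limsup M (𝓝[>] (0 : ℝ)) ≠ ⊤) ∧
      (Filter.limsup M (𝓝[>] (0 : ℝ)) ≠ ⊤ →
        (∃ L : ℝ≥0∞,
          Tendsto (fun s : ℝ => (ENNReal.ofReal s) ^ n * c s) (𝓝[>] 0) (𝓝 L) ∧
          Tendsto M (𝓝[>] (0 : ℝ)) (𝓝 L)) ∧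
        (∃ L' : ℝ≥0∞,
          Tendsto (fun s : ℝ => (ENNReal.ofReal s) ^ n * c s) atTop (𝓝 L') ∧
          Tendsto M atTop (𝓝 L'))) := by
  set f : ℝ → ℝ≥0∞ := fun s => (ENNReal.ofReal s) ^ n * c s with hfdef
  -- the key pointwise inequality
  have key : ∀ ε : ℝ, ε ∈ Ioo (0 : ℝ) 1 → ∀ s : ℝ, 0 < s →
      f s ≤ ((ENNReal.ofReal (1 - ε))⁻¹) ^ n * M (ε * s) := by
    intro ε hε s hs
    have hε1 : (0 : ℝ) < 1 - ε := by linarith [hε.2]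
    have h1 : 0 < ε * s := mul_pos hε.1 hs
    have h2 : 0 < (1 - ε) * s := mul_pos hε1 hs
    have hL := hleft (ε * s) ((1 - ε) * s) h1 h2
    rw [show ε * s + (1 - ε) * s = s by ring] at hL
    have hne0 : ENNReal.ofReal (1 - ε) ≠ 0 := ne_of_gt (ENNReal.ofReal_pos.2 hε1)
    have hneT : ENNReal.ofReal (1 - ε) ≠ ⊤ := ENNReal.ofReal_ne_top
    have heq : f s = ((ENNReal.ofReal (1 - ε))⁻¹) ^ n *
        ((ENNReal.ofReal ((1 - ε) * s)) ^ n * c s) := by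
      rw [ENNReal.ofReal_mul hε1.le, mul_pow, ← mul_assoc, ← mul_assoc, ← mul_pow,
        ENNReal.inv_mul_cancel hne0 hneT, one_pow, one_mul]
    rw [heq]
    exact mul_le_mul_right hL _
  -- limits of M
  have hMtend : Tendsto M (𝓝[>] (0 : ℝ)) (𝓝 (sSup (M '' Ioi 0))) :=
    hM.tendsto_nhdsGT (OrderTop.bddAbove _)
  set L : ℝ≥0∞ := sSup (M '' Ioi 0) with hLdef
  set N : ℝ → ℝ≥0∞ := fun s => M (max s 1) with hNdef
  have hNanti : Antitone N := fun a b hab =>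
    hM (lt_of_lt_of_le one_pos (le_max_right a 1))
      (lt_of_lt_of_le one_pos (le_max_right b 1)) (max_le_max hab le_rfl)
  have hMN : M =ᶠ[atTop] N := by
    filter_upwards [eventually_ge_atTop (1 : ℝ)] with s hs
    simp [hNdef, max_eq_left hs]
  set L' : ℝ≥0∞ := ⨅ s, N s with hL'def
  have hM'tend : Tendsto M atTop (𝓝 L') :=
    (tendsto_atTop_iInf hNanti).congr' hMN.symm
  have hML : limsup M (𝓝[>] (0 : ℝ)) = L := hMtend.limsup_eq
  have hL'L : L' ≤ L := by
    refine le_trans (iInf_le N 1) (le_sSup ?_)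
    exact ⟨max 1 1, by simp, rfl⟩
  have hpos0 : ∀ᶠ s in 𝓝[>] (0 : ℝ), 0 < s := eventually_mem_nhdsWithin
  have hposT : ∀ᶠ s in atTop, (0 : ℝ) < s := eventually_gt_atTop 0
  -- M ≤ f eventually
  have hMf0 : ∀ᶠ s in 𝓝[>] (0 : ℝ), M s ≤ f s := hpos0.mono fun s hs => hright s hs
  have hMfT : ∀ᶠ s in atTop, M s ≤ f s := hposT.mono fun s hs => hright s hs
  -- scaling maps
  have htend0 : ∀ ε : ℝ, ε ∈ Ioo (0 : ℝ) 1 →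
      Tendsto (fun s => M (ε * s)) (𝓝[>] (0 : ℝ)) (𝓝 L) := by
    intro ε hε
    refine hMtend.comp ?_
    refine tendsto_nhdsWithin_of_tendsto_nhds_of_eventually_within _ ?_ ?_
    · have hcont : Continuous (fun s : ℝ => ε * s) := continuous_const.mul continuous_id
      have h := hcont.tendsto (0 : ℝ)
      simpa using h.mono_left nhdsWithin_le_nhds
    · exact hpos0.mono fun s hs => mul_pos hε.1 hs
  have htendT : ∀ ε : ℝ, ε ∈ Ioo (0 : ℝ) 1 →
      Tendsto (fun s => M (ε * s)) atTop (𝓝 L') := by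
    intro ε hε
    exact hM'tend.comp (tendsto_id.const_mul_atTop hε.1)
  -- general limsup bound
  have bound : ∀ (F : Filter ℝ), F.NeBot → (∀ᶠ s in F, 0 < s) →
      ∀ Lf : ℝ≥0∞, (∀ ε : ℝ, ε ∈ Ioo (0 : ℝ) 1 → Tendsto (fun s => M (ε * s)) F (𝓝 Lf)) →
      ∀ ε : ℝ, ε ∈ Ioo (0 : ℝ) 1 →
      limsup f F ≤ ((ENNReal.ofReal (1 - ε))⁻¹) ^ n * Lf := by
    intro F hFne hFpos Lf htend ε hε
    haveI := hFne
    have h1 : ∀ᶠ s in F, f s ≤ ((ENNReal.ofReal (1 - ε))⁻¹) ^ n * M (ε * s) :=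
      hFpos.mono fun s hs => key ε hε s hs
    have h2 : Tendsto (fun s => ((ENNReal.ofReal (1 - ε))⁻¹) ^ n * M (ε * s)) F
        (𝓝 (((ENNReal.ofReal (1 - ε))⁻¹) ^ n * Lf)) := by
      refine ENNReal.Tendsto.const_mul (htend ε hε) (Or.inr ?_)
      have hε1 : (0 : ℝ) < 1 - ε := by linarith [hε.2]
      exact ENNReal.pow_ne_top (ENNReal.inv_ne_top.2 (ne_of_gt (ENNReal.ofReal_pos.2 hε1)))
    calc limsup f F ≤ limsup (fun s => ((ENNReal.ofReal (1 - ε))⁻¹) ^ n * M (ε * s)) F :=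
          limsup_le_limsup h1
      _ = ((ENNReal.ofReal (1 - ε))⁻¹) ^ n * Lf := h2.limsup_eq
  -- from the bound for all ε, get limsup f ≤ Lf when Lf ≠ ⊤
  have limle : ∀ (F : Filter ℝ), F.NeBot → (∀ᶠ s in F, 0 < s) →
      ∀ Lf : ℝ≥0∞, Lf ≠ ⊤ →
      (∀ ε : ℝ, ε ∈ Ioo (0 : ℝ) 1 → Tendsto (fun s => M (ε * s)) F (𝓝 Lf)) →
      limsup f F ≤ Lf := by
    intro F hFne hFpos Lf hLfT htend
    have hT : Tendsto (fun ε : ℝ => ((ENNReal.ofReal (1 - ε))⁻¹) ^ n * Lf)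
        (𝓝[>] (0 : ℝ)) (𝓝 Lf) := by
      have h0 : Tendsto (fun ε : ℝ => (1 : ℝ) - ε) (𝓝 (0 : ℝ)) (𝓝 1) := by
        simpa using (tendsto_const_nhds (x := (1 : ℝ))).sub (tendsto_id (x := 𝓝 (0 : ℝ)))
      have h1 : Tendsto (fun ε : ℝ => ENNReal.ofReal (1 - ε)) (𝓝[>] (0 : ℝ)) (𝓝 1) := by
        have h : Tendsto (ENNReal.ofReal ∘ fun ε : ℝ => 1 - ε) (𝓝[>] (0 : ℝ))
            (𝓝 (ENNReal.ofReal 1)) :=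
          ((ENNReal.continuous_ofReal.tendsto (1 : ℝ)).comp h0).mono_left nhdsWithin_le_nhds
        simpa [Function.comp_def] using h
      have h2 := ENNReal.Tendsto.mul_const
        (ENNReal.Tendsto.pow (ENNReal.tendsto_inv_iff.2 h1) (n := n)) (Or.inr hLfT)
      simpa using h2
    refine ge_of_tendsto hT ?_
    filter_upwards [Ioo_mem_nhdsGT_of_mem (by norm_num : (0:ℝ) ∈ Ico (0:ℝ) 1)] with ε hε
    exact bound F hFne hFpos Lf htend ε hε
  constructor
  · constructor
    · intro hf
      rw [hML]
      refine ne_top_of_le_ne_top hf ?_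
      rw [← hMtend.limsup_eq]
      exact limsup_le_limsup hMf0
    · intro hMne
      have hLne : L ≠ ⊤ := hML ▸ hMne
      have hb := bound (𝓝[>] (0:ℝ)) inferInstance hpos0 L htend0 (1/2) (by norm_num)
      refine ne_top_of_le_ne_top ?_ hb
      refine ENNReal.mul_ne_top (ENNReal.pow_ne_top (ENNReal.inv_ne_top.2 ?_)) hLne
      exact ne_of_gt (ENNReal.ofReal_pos.2 (by norm_num))
  · intro hMne
    have hLne : L ≠ ⊤ := hML ▸ hMne
    have hL'ne : L' ≠ ⊤ := ne_top_of_le_ne_top hLne hL'L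
    constructor
    · refine ⟨L, ?_, hMtend⟩
      refine tendsto_of_le_liminf_of_limsup_le ?_ ?_
      · rw [← hMtend.liminf_eq]
        exact liminf_le_liminf hMf0
      · exact limle (𝓝[>] (0:ℝ)) inferInstance hpos0 L hLne htend0
    · refine ⟨L', ?_, hM'tend⟩
      refine tendsto_of_le_liminf_of_limsup_le ?_ ?_
      · rw [← hM'tend.liminf_eq]
        exact liminf_le_liminf hMfT
      · exact limle atTop inferInstance hposT L' hL'ne htendT
end

section
/- Let χ : ℝ≤0 → ℝ≤0 be increasing, differentiable, and admissible in the sense that χ'(-2s) ≤ M χ'(-s) for all s > 0 and some constant M > 0. Let c : (0,∞) → [0,∞) be a decreasing function. Then ∫₀^∞ tⁿ χ'(-t) c(t) dt < ∞ if and only if ∫₀^∞ tⁿ χ'(-t) c(2t) dt < ∞. -/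
open Set MeasureTheory ENNReal

/-- Scaling lemma: `∫⁻ t in Ioi 0, f t = 2 * ∫⁻ s in Ioi 0, f (2*s)` for any `f`. -/
lemma lintegral_Ioi_two_mul (f : ℝ → ℝ≥0∞) :
    (∫⁻ t in Set.Ioi (0 : ℝ), f t) = 2 * ∫⁻ s in Set.Ioi (0 : ℝ), f (2 * s) := by
  have h2 : (2 : ℝ) ≠ 0 := two_ne_zero
  have he : MeasurableEmbedding (fun x : ℝ => 2 * x) :=
    (Homeomorph.mulLeft₀ (2 : ℝ) h2).toMeasurableEquiv.measurableEmbedding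
  have hpre : (fun x : ℝ => 2 * x) ⁻¹' Set.Ioi (0 : ℝ) = Set.Ioi (0 : ℝ) := by
    ext x; simp [Set.mem_Ioi]
  have key : (∫⁻ s in Set.Ioi (0 : ℝ), f (2 * s)) =
      ∫⁻ t, f t ∂((Measure.map (fun x : ℝ => 2 * x) volume).restrict (Set.Ioi 0)) := by
    rw [Measure.restrict_map he.measurable measurableSet_Ioi, hpre, he.lintegral_map]
  rw [key, Real.map_volume_mul_left h2, Measure.restrict_smul, lintegral_smul_measure]
  rw [smul_eq_mul, ← mul_assoc]
  norm_num [abs_of_nonneg, ← ENNReal.ofReal_mul]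
  rw [show ((2:ℝ≥0∞) = ENNReal.ofReal 2) by norm_num, ← ENNReal.ofReal_mul (by norm_num)]
  norm_num

/-- For an increasing differentiable admissible weight χ
(χ'(-2s) ≤ M χ'(-s) for all s > 0) and decreasing c : (0,∞) → [0,∞),
∫₀^∞ tⁿ χ'(-t) c(t) dt < ∞ iff ∫₀^∞ tⁿ χ'(-t) c(2t) dt < ∞. -/
theorem stmt7 (n : ℕ) (hn : 1 ≤ n) (χ : ℝ → ℝ)
    (hχmono : Monotone χ) (hχdiff : Differentiable ℝ χ)
    (M : ℝ) (hM : 0 < M)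
    (hadm : ∀ s : ℝ, 0 < s → deriv χ (-(2 * s)) ≤ M * deriv χ (-s))
    (c : ℝ → ℝ) (hc : AntitoneOn c (Set.Ioi (0 : ℝ)))
    (hcnn : ∀ s : ℝ, 0 < s → 0 ≤ c s) :
    (∫⁻ t in Set.Ioi (0 : ℝ),
        ENNReal.ofReal (t ^ n * deriv χ (-t) * c t)) < ⊤ ↔
      (∫⁻ t in Set.Ioi (0 : ℝ),
        ENNReal.ofReal (t ^ n * deriv χ (-t) * c (2 * t))) < ⊤ := by
  have hderiv : ∀ x : ℝ, 0 ≤ deriv χ x := by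
    intro x
    have hd := (hχdiff x).hasDerivAt
    rw [hasDerivAt_iff_tendsto_slope] at hd
    refine ge_of_tendsto hd ?_
    filter_upwards [self_mem_nhdsWithin] with y hy
    rw [slope_def_field]
    rcases lt_or_gt_of_ne (Ne.symm hy) with h | h
    · exact div_nonneg (sub_nonneg.2 (hχmono h.le)) (sub_nonneg.2 h.le)
    · exact div_nonneg_iff.2 (Or.inr ⟨sub_nonpos.2 (hχmono h.le), sub_nonpos.2 h.le⟩)
  constructor
  · -- easy direction: c (2t) ≤ c t
    intro h
    refine lt_of_le_of_lt (lintegral_mono_ae ?_) h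
    filter_upwards [ae_restrict_mem measurableSet_Ioi] with t ht
    apply ENNReal.ofReal_le_ofReal
    apply mul_le_mul_of_nonneg_left _ (mul_nonneg (pow_nonneg (le_of_lt ht) n) (hderiv _))
    exact hc ht (by simp [Set.mem_Ioi]; linarith [Set.mem_Ioi.1 ht]) (by linarith [Set.mem_Ioi.1 ht])
  · -- hard direction: change of variables t = 2s
    intro h
    rw [lintegral_Ioi_two_mul]
    have hbound : (∫⁻ s in Set.Ioi (0 : ℝ),
        ENNReal.ofReal ((2 * s) ^ n * deriv χ (-(2 * s)) * c (2 * s))) ≤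
        ENNReal.ofReal (2 ^ n * M) *
          ∫⁻ s in Set.Ioi (0 : ℝ), ENNReal.ofReal (s ^ n * deriv χ (-s) * c (2 * s)) := by
      rw [← lintegral_const_mul' _ _ ENNReal.ofReal_ne_top]
      refine lintegral_mono_ae ?_
      filter_upwards [ae_restrict_mem measurableSet_Ioi] with s hs
      have hs0 : (0 : ℝ) < s := hs
      have hc2 : 0 ≤ c (2 * s) := hcnn _ (by linarith)
      rw [← ENNReal.ofReal_mul (by positivity)]
      apply ENNReal.ofReal_le_ofReal
      have : (2 * s) ^ n * deriv χ (-(2 * s)) * c (2 * s) ≤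
          (2 ^ n * s ^ n) * (M * deriv χ (-s)) * c (2 * s) := by
        rw [mul_pow]
        exact mul_le_mul_of_nonneg_right
          (mul_le_mul_of_nonneg_left (hadm s hs0) (by positivity)) hc2
      calc (2 * s) ^ n * deriv χ (-(2 * s)) * c (2 * s)
          ≤ (2 ^ n * s ^ n) * (M * deriv χ (-s)) * c (2 * s) := this
        _ = 2 ^ n * M * (s ^ n * deriv χ (-s) * c (2 * s)) := by ring
    calc (2 : ℝ≥0∞) * ∫⁻ s in Set.Ioi (0 : ℝ),
          ENNReal.ofReal ((2 * s) ^ n * deriv χ (-(2 * s)) * c (2 * s))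
        ≤ 2 * (ENNReal.ofReal (2 ^ n * M) *
            ∫⁻ s in Set.Ioi (0 : ℝ), ENNReal.ofReal (s ^ n * deriv χ (-s) * c (2 * s))) :=
          mul_le_mul_right hbound 2
      _ < ⊤ := by
          apply ENNReal.mul_lt_top (by norm_num)
          exact ENNReal.mul_lt_top ENNReal.ofReal_lt_top h
end
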